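/- Fix N ≥ 1 and let θ_0, ..., θ_N be the OGM step-size sequence and h the OGM coefficients. Then the double sum satisfies sum_{j=1}^{i} sum_{k=0}^{j-1} h_{j,k} = θ_i^2 - 1 for i = 1,...,N-1, and sum_{j=1}^{N} sum_{k=0}^{j-1} h_{j,k} = (θ_N^2 - 1)/2. -/
import Mathlib

noncomputable def tseq : ℕ → ℝ
  | 0 => 1
  | i + 1 => (1 + Real.sqrt (1 + 4 * (tseq i) ^ 2)) / 2

noncomputable def θseq (N i : ℕ) : ℝ :=
  if i < N then tseq i else (1 + Real.sqrt (1 + 8 * (tseq (N - 1)) ^ 2)) / 2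

lemma tseq_ge_one : ∀ i, 1 ≤ tseq i := by
  intro i
  cases i with
  | zero => simp [tseq]
  | succ n =>
    have h : (1:ℝ) ≤ Real.sqrt (1 + 4 * tseq n ^ 2) := by
      have := Real.sqrt_le_sqrt (show (1:ℝ) ≤ 1 + 4 * tseq n ^ 2 by nlinarith [sq_nonneg (tseq n)])
      simpa using this
    simp only [tseq]; linarith

lemma tseq_pos (i : ℕ) : 0 < tseq i := lt_of_lt_of_le one_pos (tseq_ge_one i)

lemma tseq_sq (i : ℕ) : tseq (i+1) ^ 2 - tseq (i+1) = tseq i ^ 2 := by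
  have h0 : (0:ℝ) ≤ 1 + 4 * tseq i ^ 2 := by positivity
  have h := Real.sq_sqrt h0
  simp only [tseq]
  nlinarith [h]

lemma θseq_ge_one (N i : ℕ) : 1 ≤ θseq N i := by
  unfold θseq
  split
  · exact tseq_ge_one i
  · have h : (1:ℝ) ≤ Real.sqrt (1 + 8 * tseq (N-1) ^ 2) := by
      have := Real.sqrt_le_sqrt (show (1:ℝ) ≤ 1 + 8 * tseq (N-1) ^ 2 by nlinarith [sq_nonneg (tseq (N-1))])
      simpa using this
    linarith

lemma θseq_pos (N i : ℕ) : 0 < θseq N i := lt_of_lt_of_le one_pos (θseq_ge_one N i)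

lemma θseq_eq {N i : ℕ} (h : i < N) : θseq N i = tseq i := if_pos h

lemma θseq_last (N : ℕ) : θseq N N ^ 2 - θseq N N = 2 * tseq (N - 1) ^ 2 := by
  have h0 : (0:ℝ) ≤ 1 + 8 * tseq (N-1) ^ 2 := by positivity
  have h := Real.sq_sqrt h0
  unfold θseq
  rw [if_neg (lt_irrefl N)]
  nlinarith [h]

lemma sum_tseq : ∀ i, ∑ k ∈ Finset.range (i+1), tseq k = tseq i ^ 2 := by
  intro i
  induction i with
  | zero => simp [tseq]
  | succ n ih =>
    rw [Finset.sum_range_succ, ih]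
    have := tseq_sq n
    linarith

/-- Double sums of the OGM coefficients: `∑_{j=1}^{i} ∑_{k<j} h_{j,k} = θ_i² - 1`
for `1 ≤ i ≤ N-1`, and `∑_{j=1}^{N} ∑_{k<j} h_{j,k} = (θ_N² - 1)/2`. -/
theorem stmt_9 (N : ℕ) (hN : 1 ≤ N) (h : ℕ → ℕ → ℝ)
    (hO2a : ∀ i k, k < i → i + 1 ≤ N →
      h (i + 1) k = (1 / θseq N (i + 1)) *
        (2 * θseq N k - ∑ j ∈ Finset.Ico (k + 1) (i + 1), h j k))
    (hO2b : ∀ i, i + 1 ≤ N → h (i + 1) i = 1 + (2 * θseq N i - 1) / θseq N (i + 1)) :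
    (∀ i, 1 ≤ i → i < N →
      ∑ j ∈ Finset.Icc 1 i, ∑ k ∈ Finset.range j, h j k = (θseq N i) ^ 2 - 1) ∧
    (∑ j ∈ Finset.Icc 1 N, ∑ k ∈ Finset.range j, h j k = ((θseq N N) ^ 2 - 1) / 2) := by
  -- double sum swap
  have swap : ∀ i : ℕ,
      (∑ k ∈ Finset.range i, ∑ j ∈ Finset.Ico (k+1) (i+1), h j k)
        = ∑ j ∈ Finset.Icc 1 i, ∑ k ∈ Finset.range j, h j k := by
    intro i
    have h1 := Finset.sum_Ico_Ico_comm' 0 (i+1) (fun k j => h j k)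
    have h2 : (∑ k ∈ Finset.Ico 0 (i+1), ∑ j ∈ Finset.Ico (k+1) (i+1), h j k)
        = ∑ k ∈ Finset.range i, ∑ j ∈ Finset.Ico (k+1) (i+1), h j k := by
      rw [Nat.Ico_zero_eq_range, Finset.sum_range_succ]
      simp
    have h3 : (∑ j ∈ Finset.Ico 0 (i+1), ∑ k ∈ Finset.Ico 0 j, h j k)
        = ∑ j ∈ Finset.Icc 1 i, ∑ k ∈ Finset.range j, h j k := by
      rw [Nat.Ico_zero_eq_range, Finset.sum_range_succ']
      simp only [Nat.Ico_zero_eq_range, Finset.range_zero, Finset.sum_empty, add_zero]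
      rw [← Finset.Ico_add_one_right_eq_Icc, Finset.sum_Ico_eq_sum_range]
      simp [Nat.add_comm]
    rw [← h2, h1, h3]
  -- row sums
  have row : ∀ i : ℕ, i + 1 ≤ N →
      (∑ j ∈ Finset.Icc 1 i, ∑ k ∈ Finset.range j, h j k = tseq i ^ 2 - 1) →
      ∑ k ∈ Finset.range (i+1), h (i+1) k = 1 + tseq i ^ 2 / θseq N (i+1) := by
    intro i hiN hS
    have hθpos := θseq_pos N (i+1)
    have hθne : θseq N (i+1) ≠ 0 := ne_of_gt hθpos
    rw [Finset.sum_range_succ, hO2b i hiN, θseq_eq (show i < N by omega)]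
    have hinner : ∀ k ∈ Finset.range i,
        h (i+1) k = (1 / θseq N (i+1)) *
          (2 * tseq k - ∑ j ∈ Finset.Ico (k+1) (i+1), h j k) := by
      intro k hk
      rw [Finset.mem_range] at hk
      rw [hO2a i k hk hiN, θseq_eq (show k < N by omega)]
    rw [Finset.sum_congr rfl hinner, ← Finset.mul_sum, Finset.sum_sub_distrib,
      ← Finset.mul_sum, swap i, hS]
    have hsum : ∑ k ∈ Finset.range i, tseq k = tseq i ^ 2 - tseq i := by
      cases i with
      | zero => simp [tseq]
      | succ m =>
        rw [sum_tseq m]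
        have := tseq_sq m
        linarith
    rw [hsum]
    field_simp
    ring
  -- main induction
  have key : ∀ i : ℕ, i < N →
      ∑ j ∈ Finset.Icc 1 i, ∑ k ∈ Finset.range j, h j k = tseq i ^ 2 - 1 := by
    intro i
    induction i with
    | zero => intro _; simp [tseq]
    | succ n ih =>
      intro hn
      have hS := ih (by omega)
      rw [Finset.sum_Icc_succ_top (by omega : 1 ≤ n + 1), hS,
        row n (by omega) hS, θseq_eq hn]
      have := tseq_sq n
      have hpos := tseq_pos (n+1)
      field_simp
      nlinarith
  refine ⟨fun i h1 h2 => by rw [key i h2, θseq_eq h2], ?_⟩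
  -- final step
  obtain ⟨M, rfl⟩ : ∃ M, N = M + 1 := ⟨N - 1, by omega⟩
  have hS := key M (by omega)
  rw [Finset.sum_Icc_succ_top (by omega : 1 ≤ M + 1), hS, row M le_rfl hS]
  have hlast := θseq_last (M+1)
  simp only [Nat.add_sub_cancel] at hlast
  have hpos := θseq_pos (M+1) (M+1)
  field_simp
  nlinarith
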